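/- Let B be a non-singular right R-module and let A be a submodule of B. Then B is a rational extension of A if and only if A is an essential submodule of B. -/

import Mathlib

open MulOpposite

section Defs

variable (R : Type*) [Ring R]

/-- The right annihilator of an element of a right `R`-module (a module over `Rᵐᵒᵖ`),
as a right ideal of `R`. -/
def RightAnn (M : Type*) [AddCommGroup M] [Module Rᵐᵒᵖ M] (x : M) : Submodule Rᵐᵒᵖ R where
  carrier := {r : R | op r • x = 0}
  zero_mem' := by simp
  add_mem' := by
    intro a b ha hb
    simp only [Set.mem_setOf_eq] at *
    rw [op_add, add_smul, ha, hb, add_zero]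
  smul_mem' := by
    intro c a ha
    simp only [Set.mem_setOf_eq] at *
    have h1 : c • a = a * unop c := rfl
    rw [h1, op_mul, op_unop, mul_smul, ha, smul_zero]

/-- The right annihilator of a subset of `R`, as a set. -/
def rightAnnSet (A : Set R) : Set R := {r : R | ∀ a ∈ A, a * r = 0}

/-- The left annihilator of a subset of `R`, as a set. -/
def leftAnnSet (A : Set R) : Set R := {r : R | ∀ a ∈ A, r * a = 0}

/-- A submodule is essential if it intersects every nonzero submodule nontrivially. -/
def IsEssentialSubmodule {A : Type*} [Ring A] {M : Type*} [AddCommGroup M] [Module A M]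
    (U : Submodule A M) : Prop :=
  ∀ V : Submodule A M, U ⊓ V = ⊥ → V = ⊥

/-- A right `R`-module is non-singular if its singular submodule is zero, i.e. no
nonzero element has essential right annihilator. -/
def IsNonsingularMod (M : Type*) [AddCommGroup M] [Module Rᵐᵒᵖ M] : Prop :=
  ∀ x : M, IsEssentialSubmodule (RightAnn R M x) → x = 0

/-- A right `R`-module is singular if every element has essential right annihilator. -/
def IsSingularMod (M : Type*) [AddCommGroup M] [Module Rᵐᵒᵖ M] : Prop :=
  ∀ x : M, IsEssentialSubmodule (RightAnn R M x)

/-- Hattori torsion-freeness for right `R`-modules. -/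
def HattoriTorsionFree (M : Type*) [AddCommGroup M] [Module Rᵐᵒᵖ M] : Prop :=
  ∀ (x : M) (r : R), op r • x = 0 →
    ∃ (k : ℕ) (xs : Fin k → M) (rs : Fin k → R),
      x = ∑ i, op (rs i) • xs i ∧ ∀ i, rs i * r = 0

/-- A ring is torsion-free if every finitely generated right ideal is a torsion-free
right `R`-module. -/
def IsTorsionFreeRing : Prop :=
  ∀ I : Submodule Rᵐᵒᵖ R, I.FG → HattoriTorsionFree R I

/-- A ring is a right p.p.-ring if every principal right ideal is projective. -/
def IsRightPPRing : Prop :=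
  ∀ x : R, Module.Projective Rᵐᵒᵖ (Submodule.span Rᵐᵒᵖ ({x} : Set R))

/-- A ring is a left p.p.-ring if every principal left ideal is projective. -/
def IsLeftPPRing : Prop :=
  ∀ x : R, Module.Projective R (Submodule.span R ({x} : Set R))

/-- A ring is right semi-hereditary if every finitely generated right ideal is projective. -/
def IsRightSemihereditary : Prop :=
  ∀ I : Submodule Rᵐᵒᵖ R, I.FG → Module.Projective Rᵐᵒᵖ I

/-- `R` contains no infinite set of (nonzero, pairwise) orthogonal idempotents. -/
def NoInfiniteOrthogonalIdempotents : Prop :=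
  ∀ S : Set R, (∀ e ∈ S, e * e = e ∧ e ≠ 0) →
    (∀ e ∈ S, ∀ f ∈ S, e ≠ f → e * f = 0 ∧ f * e = 0) → S.Finite

/-- A ring is Baer if the right annihilator of every subset is generated, as a right
ideal, by an idempotent. -/
def IsBaerRing : Prop :=
  ∀ A : Set R, ∃ e : R, e * e = e ∧ rightAnnSet R A = {y : R | ∃ r : R, y = e * r}

/-- A ring is right Utumi if it is right non-singular and every S-closed right ideal
is a right annihilator. -/
def IsRightUtumi : Prop :=
  IsNonsingularMod R R ∧
    ∀ I : Submodule Rᵐᵒᵖ R, IsNonsingularMod R (R ⧸ I) →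
      ∃ A : Set R, (I : Set R) = rightAnnSet R A

/-- The left annihilator of an element of a left `R`-module, as a left ideal of `R`. -/
def LeftAnn (M : Type*) [AddCommGroup M] [Module R M] (x : M) : Submodule R R :=
  LinearMap.ker (LinearMap.toSpanSingleton R M x)

/-- A left `R`-module is non-singular if no nonzero element has essential left annihilator. -/
def IsLeftNonsingularMod (M : Type*) [AddCommGroup M] [Module R M] : Prop :=
  ∀ x : M, IsEssentialSubmodule (LeftAnn R M x) → x = 0

/-- A ring is left Utumi if it is left non-singular and every S-closed left ideal is a
left annihilator. -/
def IsLeftUtumi : Prop :=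
  IsLeftNonsingularMod R R ∧
    ∀ I : Submodule R R, IsLeftNonsingularMod R (R ⧸ I) →
      ∃ A : Set R, (I : Set R) = leftAnnSet R A

end Defs


section Aux

variable {R : Type*} [Ring R] {B : Type*} [AddCommGroup B] [Module Rᵐᵒᵖ B]

/-- The map `r ↦ op r • x` as an `Rᵐᵒᵖ`-linear map from `R` to `B`. -/
def smulMap (x : B) : R →ₗ[Rᵐᵒᵖ] B where
  toFun r := op r • x
  map_add' a b := by show op (a + b) • x = op a • x + op b • x; rw [op_add, add_smul]
  map_smul' c r := by
    simp only [RingHom.id_apply]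
    show op (c • r) • x = c • (op r • x)
    rw [← mul_smul]
    congr 1

lemma ess_mono {M : Type*} [AddCommGroup M] [Module Rᵐᵒᵖ M] {I K : Submodule Rᵐᵒᵖ M}
    (h : I ≤ K) (hI : IsEssentialSubmodule I) : IsEssentialSubmodule K := by
  intro V hV
  exact hI V (le_bot_iff.mp (le_trans (inf_le_inf_right V h) hV.le))

lemma ess_comap (A : Submodule Rᵐᵒᵖ B) (hA : IsEssentialSubmodule A) (x : B) :
    IsEssentialSubmodule (A.comap (smulMap x)) := by
  intro V hV
  have hW : A ⊓ V.map (smulMap x) = ⊥ := by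
    rw [eq_bot_iff]
    rintro y ⟨hyA, r, hrV, rfl⟩
    have hmem : r ∈ A.comap (smulMap x) ⊓ V := ⟨hyA, hrV⟩
    rw [hV, Submodule.mem_bot] at hmem
    simp [hmem]
  have hW' := hA _ hW
  rw [eq_bot_iff]
  intro r hr
  have h1 : smulMap x r ∈ V.map (smulMap x) := ⟨r, hr, rfl⟩
  rw [hW', Submodule.mem_bot] at h1
  have h2 : r ∈ A.comap (smulMap x) ⊓ V :=
    ⟨show smulMap x r ∈ A by rw [h1]; exact A.zero_mem, hr⟩
  rw [hV] at h2
  exact h2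

end Aux

/-- For a non-singular right `R`-module `B` and a submodule `A` of `B`, `B` is a
rational extension of `A` (i.e. `Hom(M/A, B) = 0` for every `A ≤ M ≤ B`) if and only if
`A` is essential in `B`. -/
theorem stmt_14 (R : Type*) [Ring R] (B : Type*) [AddCommGroup B] [Module Rᵐᵒᵖ B]
    (hB : IsNonsingularMod R B) (A : Submodule Rᵐᵒᵖ B) :
    (∀ M : Submodule Rᵐᵒᵖ B, A ≤ M →
        ∀ f : (M ⧸ A.comap M.subtype) →ₗ[Rᵐᵒᵖ] B, f = 0) ↔
      IsEssentialSubmodule A := by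
  constructor
  · intro H V hV
    set M := A ⊔ V with hM
    set A' : Submodule Rᵐᵒᵖ M := A.comap M.subtype with hA'
    have hVM : V ≤ M := le_sup_right
    set g : V →ₗ[Rᵐᵒᵖ] (M ⧸ A') := A'.mkQ.comp (Submodule.inclusion hVM) with hg
    have hginj : Function.Injective g := by
      rw [← LinearMap.ker_eq_bot, eq_bot_iff]
      rintro ⟨v, hv⟩ hker
      have : (⟨v, hVM hv⟩ : M) ∈ A' := by
        simpa [hg, Submodule.Quotient.mk_eq_zero, Submodule.inclusion_apply] using hker
      have hvA : v ∈ A := this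
      have : v ∈ A ⊓ V := ⟨hvA, hv⟩
      rw [hV] at this
      simpa using this
    have hgsurj : Function.Surjective g := by
      rintro z
      obtain ⟨⟨m, hm⟩, rfl⟩ := A'.mkQ_surjective z
      rw [hM, Submodule.mem_sup] at hm
      obtain ⟨a, ha, v, hv, rfl⟩ := hm
      refine ⟨⟨v, hv⟩, ?_⟩
      rw [hg]
      simp only [LinearMap.comp_apply, Submodule.inclusion_apply, Submodule.mkQ_apply]
      rw [Submodule.Quotient.eq]
      show v - (a + v) ∈ A
      have hva : v - (a + v) = -a := by abel
      rw [hva]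
      exact A.neg_mem ha
    set e := LinearEquiv.ofBijective g ⟨hginj, hgsurj⟩ with he
    have hf := H M le_sup_left (V.subtype.comp (e.symm : (M ⧸ A') →ₗ[Rᵐᵒᵖ] V))
    rw [eq_bot_iff]
    intro v hv
    have hes : e.symm (g ⟨v, hv⟩) = ⟨v, hv⟩ := e.symm_apply_apply ⟨v, hv⟩
    have hthis := congrFun (congrArg DFunLike.coe hf) (g ⟨v, hv⟩)
    simp only [LinearMap.comp_apply, LinearMap.zero_apply, LinearEquiv.coe_coe] at hthis
    rw [hes] at hthis
    simpa using hthis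
  · intro hA M hAM f
    have key : ∀ x : M, f ((A.comap M.subtype).mkQ x) = 0 := by
      rintro ⟨x, hx⟩
      apply hB
      apply ess_mono (I := A.comap (smulMap x)) ?_ (ess_comap A hA x)
      intro r hr
      have hrx : op r • x ∈ A := hr
      show op r • f ((A.comap M.subtype).mkQ ⟨x, hx⟩) = 0
      rw [← map_smul, ← map_smul]
      have : (op r • (⟨x, hx⟩ : M)) ∈ (A.comap M.subtype) := by
        show op r • x ∈ A
        exact hrx
      rw [show (A.comap M.subtype).mkQ (op r • (⟨x, hx⟩ : M)) = 0 by
        rw [Submodule.mkQ_apply, Submodule.Quotient.mk_eq_zero]; exact this, map_zero]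
    ext z
    simpa using key z
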